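/- Average-case query cost bound for SQ-DB-SKY: Let m ≥ 1 be an integer and define a : ℕ → ℚ by a 0 = 1 and, for every s ≥ 1, a s = 1 + (m / s) · Σ_{i=0}^{s−1} a i. Then for every s ≥ 0, the real number a s satisfies a s ≤ (e + e·s/m)^m, where e is Euler's number. -/

import Mathlib

/-- `m^m ≤ e^m * m!` over the reals. -/
lemma pow_self_le_exp_mul_factorial (m : ℕ) :
    (m : ℝ) ^ m ≤ Real.exp 1 ^ m * (Nat.factorial m : ℝ) := by
  have h1 : (m : ℝ) ^ m / (Nat.factorial m : ℝ) ≤ Real.exp m := by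
    calc (m : ℝ) ^ m / (Nat.factorial m : ℝ)
        ≤ ∑ i ∈ Finset.range (m + 1), (m : ℝ) ^ i / (Nat.factorial i) := by
          refine Finset.single_le_sum (f := fun i => (m : ℝ) ^ i / (Nat.factorial i)) ?_ ?_
          · intro i _; positivity
          · simp
      _ ≤ Real.exp m := Real.sum_le_exp_of_nonneg (by positivity) _
  have h2 : Real.exp (m : ℝ) = Real.exp 1 ^ m := by
    rw [← Real.exp_nat_mul, mul_one]
  have hf : (0 : ℝ) < (Nat.factorial m : ℝ) := by
    exact_mod_cast Nat.factorial_pos m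
  rw [div_le_iff₀ hf] at h1
  calc (m : ℝ) ^ m ≤ Real.exp m * (Nat.factorial m : ℝ) := h1
    _ = Real.exp 1 ^ m * (Nat.factorial m : ℝ) := by rw [h2]

/-- Average-case query cost bound for SQ-DB-SKY: if `a 0 = 1` and
`a s = 1 + (m/s) * ∑_{i<s} a i` for `s ≥ 1`, then, as a real number,
`a s ≤ (e + e·s/m)^m`. -/
theorem sq_avg_cost_exp_bound (m : ℕ) (hm : 1 ≤ m) (a : ℕ → ℚ)
    (h0 : a 0 = 1)
    (hrec : ∀ s : ℕ, 1 ≤ s → a s = 1 + ((m : ℚ) / (s : ℚ)) * ∑ i ∈ Finset.range s, a i) :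
    ∀ s : ℕ, ((a s : ℝ)) ≤ (Real.exp 1 + Real.exp 1 * s / m) ^ m := by
  -- Step 1: every `a s` is at least 1.
  have hpos : ∀ s : ℕ, 1 ≤ a s := by
    intro s
    induction s using Nat.strong_induction_on with
    | _ s ih =>
      rcases Nat.eq_zero_or_pos s with rfl | hs
      · rw [h0]
      · rw [hrec s hs]
        have hsum : (0 : ℚ) ≤ ∑ i ∈ Finset.range s, a i := by
          apply Finset.sum_nonneg
          intro i hi
          exact le_trans zero_le_one (ih i (Finset.mem_range.mp hi))
        have hms : (0 : ℚ) ≤ (m : ℚ) / (s : ℚ) := by positivity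
        nlinarith
  -- Step 2: `a s ≤ (s+m).choose m` by strong induction (hockey stick).
  have hB : ∀ s : ℕ, a s ≤ (((s + m).choose m : ℕ) : ℚ) := by
    intro s
    induction s using Nat.strong_induction_on with
    | _ s ih =>
      rcases Nat.eq_zero_or_pos s with rfl | hs
      · simp [h0]
      · rw [hrec s hs]
        have hsum : ∑ i ∈ Finset.range s, a i ≤ (((s + m).choose (m + 1) : ℕ) : ℚ) := by
          have hsum1 : ∑ i ∈ Finset.range s, a i
              ≤ ∑ i ∈ Finset.range s, (((i + m).choose m : ℕ) : ℚ) := by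
            apply Finset.sum_le_sum
            intro i hi
            exact ih i (Finset.mem_range.mp hi)
          have hhs : ∑ i ∈ Finset.range s, ((i + m).choose m : ℕ) = (s + m).choose (m + 1) := by
            obtain ⟨t, rfl⟩ := Nat.exists_eq_add_of_le hs
            have := Nat.sum_range_add_choose t m
            simpa [Nat.add_comm, Nat.add_assoc, Nat.add_left_comm] using this
          calc ∑ i ∈ Finset.range s, a i
              ≤ ∑ i ∈ Finset.range s, (((i + m).choose m : ℕ) : ℚ) := hsum1
            _ = (((s + m).choose (m + 1) : ℕ) : ℚ) := by
                rw [← Nat.cast_sum, hhs]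
        -- identity: choose(s+m, m+1) * (m+1) = choose(s+m, m) * s
        have hkeyN : (s + m).choose (m + 1) * (m + 1) = (s + m).choose m * s := by
          have := Nat.choose_succ_right_eq (s + m) m
          simpa [Nat.add_sub_cancel] using this
        have hkey : (((s + m).choose (m + 1) : ℕ) : ℚ) * ((m : ℚ) + 1)
            = (((s + m).choose m : ℕ) : ℚ) * (s : ℚ) := by
          exact_mod_cast hkeyN
        have hC : ((m : ℚ) + 1) ≤ (((s + m).choose m : ℕ) : ℚ) := by
          have h1 : m + 1 ≤ (s + m).choose m := by
            calc m + 1 = (m + 1).choose m := (Nat.choose_succ_self_right m).symm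
              _ ≤ (s + m).choose m := Nat.choose_le_choose m (by omega)
          exact_mod_cast h1
        have hs' : (0 : ℚ) < (s : ℚ) := by exact_mod_cast hs
        have hm1 : (0 : ℚ) < (m : ℚ) + 1 := by positivity
        have hmn : (0 : ℚ) ≤ (m : ℚ) := by positivity
        set C : ℚ := (((s + m).choose m : ℕ) : ℚ)
        set D : ℚ := (((s + m).choose (m + 1) : ℕ) : ℚ)
        have h5 : ((m : ℚ) / s) * ∑ i ∈ Finset.range s, a i ≤ ((m : ℚ) / s) * D :=
          mul_le_mul_of_nonneg_left hsum (by positivity)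
        have h6 : ((m : ℚ) / s) * D = (m : ℚ) * C / ((m : ℚ) + 1) := by
          field_simp
          linear_combination hkey
        have h7 : 1 + (m : ℚ) * C / ((m : ℚ) + 1) ≤ C := by
          rw [← sub_nonneg]
          have he : C - (1 + (m : ℚ) * C / ((m : ℚ) + 1))
              = (C - ((m : ℚ) + 1)) / ((m : ℚ) + 1) := by field_simp; ring
          rw [he]
          exact div_nonneg (by linarith) (le_of_lt hm1)
        calc 1 + ((m : ℚ) / s) * ∑ i ∈ Finset.range s, a i
            ≤ 1 + ((m : ℚ) / s) * D := by linarith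
          _ = 1 + (m : ℚ) * C / ((m : ℚ) + 1) := by rw [h6]
          _ ≤ C := h7
  -- Step 3: bound the binomial coefficient in ℝ.
  intro s
  have hmR : (0 : ℝ) < (m : ℝ) := by exact_mod_cast hm
  have hfR : (0 : ℝ) < (Nat.factorial m : ℝ) := by exact_mod_cast Nat.factorial_pos m
  have hCf : (((s + m).choose m : ℕ) : ℝ) * (Nat.factorial m : ℝ) ≤ ((s : ℝ) + m) ^ m := by
    have h1 : (s + m).descFactorial m ≤ (s + m) ^ m := Nat.descFactorial_le_pow _ _
    rw [Nat.descFactorial_eq_factorial_mul_choose] at h1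
    have : (((Nat.factorial m) * ((s + m).choose m) : ℕ) : ℝ) ≤ (((s + m) ^ m : ℕ) : ℝ) := by
      exact_mod_cast h1
    push_cast at this
    linarith [this]
  have hfe := pow_self_le_exp_mul_factorial m
  have hRHS : (Real.exp 1 + Real.exp 1 * s / m) ^ m
      = Real.exp 1 ^ m * ((s : ℝ) + m) ^ m / (m : ℝ) ^ m := by
    have hbase : Real.exp 1 + Real.exp 1 * s / m = Real.exp 1 * ((s : ℝ) + m) / m := by
      field_simp
      ring
    rw [hbase, div_pow, mul_pow]
  have haC : ((a s : ℝ)) ≤ (((s + m).choose m : ℕ) : ℝ) := by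
    exact_mod_cast hB s
  rw [hRHS]
  refine le_trans haC ?_
  rw [le_div_iff₀ (by positivity)]
  have hsm : (0 : ℝ) ≤ ((s : ℝ) + m) ^ m := by positivity
  have hCpos : (0 : ℝ) ≤ (((s + m).choose m : ℕ) : ℝ) := by positivity
  -- C * m^m ≤ (e^m * m!) * C ... we need C * m^m ≤ e^m (s+m)^m.
  calc (((s + m).choose m : ℕ) : ℝ) * (m : ℝ) ^ m
      ≤ (((s + m).choose m : ℕ) : ℝ) * (Real.exp 1 ^ m * (Nat.factorial m : ℝ)) :=
        mul_le_mul_of_nonneg_left hfe hCpos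
    _ = Real.exp 1 ^ m * ((((s + m).choose m : ℕ) : ℝ) * (Nat.factorial m : ℝ)) := by ring
    _ ≤ Real.exp 1 ^ m * ((s : ℝ) + m) ^ m :=
        mul_le_mul_of_nonneg_left hCf (by positivity)
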